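/- Let b ≠ 0, C₁, C₂ be real numbers, and define φ(η) = exp((C₁ − b²(η + C₂)²)/(2b)). Then φ satisfies φ·φ'' − (φ')² + bφ² = 0 for all η ∈ ℝ. -/

import Mathlib

lemma stmt8_aux (b C₁ C₂ : ℝ) (hb : b ≠ 0) (η : ℝ) :
    HasDerivAt (fun η => Real.exp ((C₁ - b ^ 2 * (η + C₂) ^ 2) / (2 * b)))
      (-(b * (η + C₂)) * Real.exp ((C₁ - b ^ 2 * (η + C₂) ^ 2) / (2 * b))) η := by
  have h1 : HasDerivAt (fun η : ℝ => (C₁ - b ^ 2 * (η + C₂) ^ 2) / (2 * b))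
      (-(b * (η + C₂))) η := by
    have h2 : HasDerivAt (fun η : ℝ => η + C₂) 1 η :=
      (hasDerivAt_id η).add_const C₂
    have h3 : HasDerivAt (fun η : ℝ => C₁ - b ^ 2 * (η + C₂) ^ 2)
        (-(b ^ 2 * (2 * (η + C₂)))) η := by
      simpa using ((h2.pow 2).const_mul (b ^ 2)).const_sub C₁
    have := h3.div_const (2 * b)
    convert this using 1
    all_goals first | rfl | (rw [eq_div_iff (mul_ne_zero two_ne_zero hb)]; ring)
  simpa [mul_comm] using h1.exp

lemma stmt8_deriv (b C₁ C₂ : ℝ) (hb : b ≠ 0) :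
    deriv (fun η => Real.exp ((C₁ - b ^ 2 * (η + C₂) ^ 2) / (2 * b)))
      = fun η => -(b * (η + C₂)) * Real.exp ((C₁ - b ^ 2 * (η + C₂) ^ 2) / (2 * b)) := by
  funext η
  exact (stmt8_aux b C₁ C₂ hb η).deriv

/-- `φ = exp[(C₁ − b²(η+C₂)²)/(2b)]` solves the case `a = 1, n = 1`. -/
theorem stmt_8 (b C₁ C₂ : ℝ) (hb : b ≠ 0) :
    ∀ η : ℝ,
      (fun η => Real.exp ((C₁ - b ^ 2 * (η + C₂) ^ 2) / (2 * b))) η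
          * deriv (deriv (fun η => Real.exp ((C₁ - b ^ 2 * (η + C₂) ^ 2) / (2 * b)))) η
        - (deriv (fun η => Real.exp ((C₁ - b ^ 2 * (η + C₂) ^ 2) / (2 * b))) η) ^ 2
        + b * ((fun η => Real.exp ((C₁ - b ^ 2 * (η + C₂) ^ 2) / (2 * b))) η) ^ 2 = 0 := by
  intro η
  have hd := stmt8_deriv b C₁ C₂ hb
  rw [hd]
  have h2 : HasDerivAt
      (fun η => -(b * (η + C₂)) * Real.exp ((C₁ - b ^ 2 * (η + C₂) ^ 2) / (2 * b)))
      (-b * Real.exp ((C₁ - b ^ 2 * (η + C₂) ^ 2) / (2 * b))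
        + -(b * (η + C₂)) * (-(b * (η + C₂)) * Real.exp ((C₁ - b ^ 2 * (η + C₂) ^ 2) / (2 * b)))) η := by
    have hlin : HasDerivAt (fun η : ℝ => -(b * (η + C₂))) (-b) η := by
      have := (((hasDerivAt_id η).add_const C₂).const_mul b).neg
      simp only [mul_one] at this
      exact this
    exact hlin.mul (stmt8_aux b C₁ C₂ hb η)
  rw [h2.deriv]
  ring
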